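/- For each j with 1 ≤ j ≤ r, the set L_j := { g ∈ K(t) : F_j divides Φ_g in K(t)[x] } (together with the constants of K) is an intermediate field of the extension K(t)/K(f): it contains K(f) and is closed under addition, additive inverses, multiplication, and multiplicative inverses of nonzero elements. -/
import Mathlib


open Polynomial

lemma constant_of_isAlgebraic {K : Type*} [Field K] {f : RatFunc K}
    (h : IsAlgebraic K f) : ∃ c : K, f = RatFunc.C c := by
  have hint : IsIntegral K f := h.isIntegral
  have hint2 : IsIntegral (Polynomial K) f := hint.tower_top
  obtain ⟨p, hp⟩ := IsIntegrallyClosed.isIntegral_iff.mp hint2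
  have hinj : Function.Injective (algebraMap (Polynomial K) (RatFunc K)) :=
    IsFractionRing.injective _ _
  have hpint : IsIntegral K p := by
    rw [← isIntegral_algebraMap_iff hinj, hp]; exact hint
  obtain ⟨m, hm, hme⟩ := hpint
  have hcomp : m.comp p = 0 := by
    rw [Polynomial.comp, ← Polynomial.algebraMap_eq]; exact hme
  rcases Polynomial.comp_eq_zero_iff.mp hcomp with h0 | ⟨_, hc⟩
  · exact absurd h0 hm.ne_zero
  · exact ⟨p.coeff 0, by rw [← hp, hc]; simp [RatFunc.algebraMap_eq_C]⟩


/-- `Φ_g(x) := g_n(x) − g(t)·g_d(x) ∈ K(t)[x]`, where `g = g_n/g_d` with `g_n, g_d` coprime. -/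
noncomputable def Phi {K : Type*} [Field K] (g : RatFunc K) : Polynomial (RatFunc K) :=
  g.num.map (algebraMap K (RatFunc K)) - Polynomial.C g * (g.denom.map (algebraMap K (RatFunc K)))

/-- A rational function is nonconstant if it is not of the form `C c`. -/
def Nonconst {K : Type*} [Field K] (g : RatFunc K) : Prop := ∀ c : K, g ≠ RatFunc.C c

/-- For a monic irreducible factor `F` of `Φ_f`, the set
`L := { g ∈ K(t) : F ∣ Φ_g } ∪ K` is an intermediate field of `K(t)/K(f)`:
it contains `K(f)` and is closed under addition, negation, multiplication and
inverses of nonzero elements. -/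
theorem stmt_1 {K : Type*} [Field K] (f : RatFunc K) (hf : Nonconst f)
    (hmonic : (Phi f).Monic)
    (F : Polynomial (RatFunc K)) (hFm : F.Monic) (hFirr : Irreducible F) (hFdvd : F ∣ Phi f)
    (L : Set (RatFunc K))
    (hLdef : L = {g : RatFunc K | F ∣ Phi g ∨ ∃ c : K, g = RatFunc.C c}) :
    (∀ g ∈ (IntermediateField.adjoin K {f} : IntermediateField K (RatFunc K)), g ∈ L) ∧
    (∀ a ∈ L, ∀ b ∈ L, a + b ∈ L) ∧
    (∀ a ∈ L, -a ∈ L) ∧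
    (∀ a ∈ L, ∀ b ∈ L, a * b ∈ L) ∧
    (∀ a ∈ L, a ≠ 0 → a⁻¹ ∈ L) := by
  haveI : Fact (Irreducible F) := ⟨hFirr⟩
  set E := AdjoinRoot F with hE
  letI : Field E := by infer_instance
  set θ : E := AdjoinRoot.root F with hθ
  set ι : RatFunc K →+* E := algebraMap (RatFunc K) E with hι
  have hι_inj : Function.Injective ι := ι.injective
  set evE : Polynomial K →+* E := (Polynomial.aeval θ : Polynomial K →ₐ[K] E).toRingHom with hevE
  -- evaluation of mapped polynomials
  have hmap : ∀ p : Polynomial K,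
      Polynomial.aeval θ (p.map (algebraMap K (RatFunc K))) = evE p := by
    intro p
    rw [Polynomial.aeval_map_algebraMap]
    rfl
  -- divisibility characterization
  have hdvd : ∀ g : RatFunc K, F ∣ Phi g ↔ evE g.num = ι g * evE g.denom := by
    intro g
    rw [← AdjoinRoot.mk_eq_zero, ← AdjoinRoot.aeval_eq]
    rw [Phi]
    rw [map_sub, map_mul, Polynomial.aeval_C, hmap, hmap, sub_eq_zero]
  -- f's denominator does not vanish at θ
  have hfden : evE f.denom ≠ 0 := by
    intro h0
    have hnum : evE f.num = 0 := by
      rw [(hdvd f).mp hFdvd, h0, mul_zero]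
    obtain ⟨a, b, hab⟩ := RatFunc.isCoprime_num_denom f
    have := congrArg evE hab
    rw [map_add, map_mul, map_mul, hnum, h0, mul_zero, mul_zero, add_zero, map_one] at this
    exact zero_ne_one this
  -- key: evE q ≠ 0 for q ≠ 0
  have hden : ∀ q : Polynomial K, q ≠ 0 → evE q ≠ 0 := by
    intro q hq h0
    have hθint : IsIntegral K θ := (IsAlgebraic.isIntegral ⟨q, hq, h0⟩)
    set M := IntermediateField.adjoin K {θ} with hM
    haveI := IntermediateField.isAlgebraic_adjoin_simple hθint
    have hevmem : ∀ p : Polynomial K, evE p ∈ M := by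
      intro p
      apply IntermediateField.algebra_adjoin_le_adjoin K {θ}
      rw [Algebra.adjoin_singleton_eq_range_aeval]
      exact ⟨p, rfl⟩
    have hιf : ι f ∈ M := by
      have h1 : ι f = evE f.num / evE f.denom := by
        rw [(hdvd f).mp hFdvd]
        field_simp
      rw [h1]
      exact div_mem (hevmem f.num) (hevmem f.denom)
    have halg : IsAlgebraic K (ι f) :=
      IntermediateField.isAlgebraic_iff.mp (Algebra.IsAlgebraic.isAlgebraic (⟨ι f, hιf⟩ : M))
    have : IsAlgebraic K f := (isAlgebraic_algebraMap_iff hι_inj).mp halg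
    obtain ⟨c, rfl⟩ := constant_of_isAlgebraic this
    exact hf c rfl
  have hcond : nonZeroDivisors (Polynomial K) ≤ Submonoid.comap (evE : Polynomial K →* E) (nonZeroDivisors E) := by
    intro q hq
    rw [Submonoid.mem_comap, mem_nonZeroDivisors_iff_ne_zero]
    exact hden q (nonZeroDivisors.ne_zero hq)
  set ψ : RatFunc K →+* E := RatFunc.liftRingHom evE hcond with hψ
  have hψ_apply : ∀ g : RatFunc K, ψ g = evE g.num / evE g.denom := fun g =>
    RatFunc.liftRingHom_apply evE hcond g
  -- membership characterization
  have hmem : ∀ g : RatFunc K, g ∈ L ↔ ψ g = ι g := by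
    intro g
    rw [hLdef]
    constructor
    · rintro (h | ⟨c, rfl⟩)
      · rw [hψ_apply, (hdvd g).mp h, mul_div_assoc, div_self (hden _ (RatFunc.denom_ne_zero g)),
          mul_one]
      · rw [hψ_apply, RatFunc.num_C, RatFunc.denom_C]
        simp only [map_one, div_one, hevE, AlgHom.toRingHom_eq_coe, RingHom.coe_coe,
          Polynomial.aeval_C]
        rw [hι, IsScalarTower.algebraMap_apply K (RatFunc K) E, RatFunc.algebraMap_eq_C]
    · intro h
      left
      rw [hdvd]
      rw [hψ_apply, div_eq_iff (hden _ (RatFunc.denom_ne_zero g))] at h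
      exact h
  -- ψ and ι agree on constants
  have hconst : ∀ c : K, ψ (RatFunc.C c) = ι (RatFunc.C c) := by
    intro c
    have : RatFunc.C c ∈ L := by rw [hLdef]; exact Or.inr ⟨c, rfl⟩
    exact (hmem _).mp this
  have hfL : f ∈ L := by rw [hLdef]; exact Or.inl hFdvd
  refine ⟨?_, ?_, ?_, ?_, ?_⟩
  · intro g hg
    rw [hmem]
    induction hg using IntermediateField.adjoin_induction with
    | mem x hx => rw [Set.mem_singleton_iff] at hx; rw [hx]; exact (hmem f).mp hfL
    | algebraMap x => rw [RatFunc.algebraMap_eq_C]; exact hconst x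
    | add x y hx hy ihx ihy => rw [map_add, map_add, ihx, ihy]
    | inv x hx ih => rw [map_inv₀, map_inv₀, ih]
    | mul x y hx hy ihx ihy => rw [map_mul, map_mul, ihx, ihy]
  · intro a ha b hb
    rw [hmem] at *
    rw [map_add, map_add, ha, hb]
  · intro a ha
    rw [hmem] at *
    rw [map_neg, map_neg, ha]
  · intro a ha b hb
    rw [hmem] at *
    rw [map_mul, map_mul, ha, hb]
  · intro a ha _
    rw [hmem] at *
    rw [map_inv₀, map_inv₀, ha]
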